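/- arXiv:2303.16110 — 2 statements merged into one kernel-verified Lean document; each statement's English description precedes it below -/
import Mathlib

section
/- Let u, Δu ∈ ℝ^N with weighted average ⟨·⟩ using positive weights w_j summing over j, let Δū := Δu - ⟨Δu⟩·1, and let G ∈ ℝ^N with ⟨G⟩ = 0 and ⟨G²⟩ := Σ_j G_j² w_j > 0. Suppose the discriminant condition 1 - ⟨G²⟩(2⟨u|Δū⟩ + ⟨Δū²⟩ - 2Δℓ₂)/⟨u + Δū|G⟩² ≥ 0 holds and ⟨u + Δū|G⟩ ≠ 0. Then setting ε = (⟨u + Δū|G⟩/⟨G²⟩)·(-1 + √(1 - ⟨G²⟩(2⟨u|Δū⟩ + ⟨Δū²⟩ - 2Δℓ₂)/⟨u + Δū|G⟩²)) and defining the corrected update Δu' := Δū + εG, we have ⟨Δu'⟩ = 0 and ½⟨(u + Δu')²⟩ = ½⟨u²⟩ + Δℓ₂. -/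
/-- Discrete-time error correction: with weights `w_j > 0`, weighted average
`⟨a⟩ = Σ a_j w_j / Σ w_j` and inner product `⟨a|b⟩ = Σ a_j b_j w_j`, with
`Δū = Δu - ⟨Δu⟩1`, `⟨G⟩ = 0`, `⟨G²⟩ > 0`, `⟨u+Δū|G⟩ ≠ 0`, and the discriminant
nonnegative, the choice of `ε` with the plus sign makes `Δu' = Δū + εG` satisfy
`⟨Δu'⟩ = 0` and `½⟨(u+Δu')²⟩ = ½⟨u²⟩ + Δℓ₂`. -/
theorem stmt4 (N : ℕ) (w : Fin N → ℝ) (hw : ∀ j, 0 < w j)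
    (u Δu G : Fin N → ℝ) (Δl : ℝ)
    (avg : (Fin N → ℝ) → ℝ) (ip : (Fin N → ℝ) → (Fin N → ℝ) → ℝ)
    (havg : ∀ a, avg a = (∑ j, a j * w j) / (∑ j, w j))
    (hip : ∀ a b, ip a b = ∑ j, a j * b j * w j)
    (Δub : Fin N → ℝ) (hΔub : Δub = fun j => Δu j - avg Δu)
    (hGavg : avg G = 0) (hGG : 0 < ip G G)
    (hC : ip (fun j => u j + Δub j) G ≠ 0)
    (hdisc : 0 ≤ 1 - ip G G * (2 * ip u Δub + ip Δub Δub - 2 * Δl) /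
        (ip (fun j => u j + Δub j) G) ^ 2)
    (ε : ℝ)
    (hε : ε = (ip (fun j => u j + Δub j) G / ip G G) *
      (-1 + Real.sqrt (1 - ip G G * (2 * ip u Δub + ip Δub Δub - 2 * Δl) /
        (ip (fun j => u j + Δub j) G) ^ 2)))
    (Δu' : Fin N → ℝ) (hΔu' : Δu' = fun j => Δub j + ε * G j) :
    avg Δu' = 0 ∧
      (1 / 2) * ip (fun j => u j + Δu' j) (fun j => u j + Δu' j) =
        (1 / 2) * ip u u + Δl := by
  -- basic positivity of the total weight
  have hN : 0 < N := by
    by_contra h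
    push_neg at h
    interval_cases N
    simp [hip] at hGG
  have hS : 0 < ∑ j, w j :=
    Finset.sum_pos (fun j _ => hw j)
      (by simpa [Finset.univ_nonempty_iff, ← Fin.pos_iff_nonempty] using hN)
  have hSne : (∑ j, w j) ≠ 0 := ne_of_gt hS
  -- sums of Δub and G against w vanish
  have hGsum : (∑ j, G j * w j) = 0 := by
    rw [havg] at hGavg
    field_simp at hGavg
    exact hGavg.trans (mul_zero _)
  have hΔubsum : (∑ j, Δub j * w j) = 0 := by
    subst hΔub
    have : (∑ j, (Δu j - avg Δu) * w j)
        = (∑ j, Δu j * w j) - avg Δu * (∑ j, w j) := by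
      rw [Finset.mul_sum, ← Finset.sum_sub_distrib]
      exact Finset.sum_congr rfl fun j _ => by ring
    rw [this, havg]
    field_simp
    ring
  constructor
  · rw [havg, hΔu']
    have : (∑ j, (Δub j + ε * G j) * w j)
        = (∑ j, Δub j * w j) + ε * (∑ j, G j * w j) := by
      rw [Finset.mul_sum, ← Finset.sum_add_distrib]
      exact Finset.sum_congr rfl fun j _ => by ring
    simp [this, hΔubsum, hGsum]
  · set C := ip (fun j => u j + Δub j) G with hCdef
    set g := ip G G with hgdef
    set K := 2 * ip u Δub + ip Δub Δub - 2 * Δl with hKdef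
    have hgne : g ≠ 0 := ne_of_gt hGG
    have hsq : Real.sqrt (1 - g * K / C ^ 2) ^ 2 = 1 - g * K / C ^ 2 :=
      Real.sq_sqrt hdisc
    have hquad : g * ε ^ 2 + 2 * C * ε + K = 0 := by
      set s := Real.sqrt (1 - g * K / C ^ 2) with hs
      have h1 : g * ε ^ 2 + 2 * C * ε + K = C ^ 2 / g * (s ^ 2 - 1) + K := by
        rw [hε]; field_simp; ring
      rw [h1, hsq]
      field_simp
      ring
    have expand : ip (fun j => u j + Δu' j) (fun j => u j + Δu' j)
        = ip u u + (2 * ip u Δub + ip Δub Δub) + (2 * C * ε + g * ε ^ 2) := by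
      simp only [hip, hΔu', hCdef, hgdef, Finset.mul_sum, Finset.sum_mul,
        ← Finset.sum_add_distrib]
      exact Finset.sum_congr rfl fun j _ => by ring
    rw [expand]
    have : 2 * ip u Δub + ip Δub Δub = K + 2 * Δl := by rw [hKdef]; ring
    rw [this]
    linarith [hquad]
end

section
/- For the 1D compressible Euler equations with equation of state E = p/(γ-1) + ½ρv², the function p* := ((γ-1)/(γ+1))·(p/ρ^γ)^{1/(γ+1)} and entropy η = ρ·e^{s/(γ+1)} with s = log(p/ρ^γ) satisfy: the gradient of η with respect to the conserved variables u = (ρ, ρv, E) is w = (p*/p)·(E, -ρv, ρ). -/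
/-- For the 1D compressible Euler equations with `E = p/(γ-1) + ½ρv²`,
`p* = ((γ-1)/(γ+1))(p/ρ^γ)^{1/(γ+1)}`, and entropy
`η(u₁,u₂,u₃) = u₁ ((γ-1)(u₃ - u₂²/(2u₁))/u₁^γ)^{1/(γ+1)}` (i.e.
`η = ρ e^{s/(γ+1)}`, `s = log(p/ρ^γ)`), the gradient of `η` with respect to
the conserved variables `u = (ρ, ρv, E)` is `w = (p*/p)(E, -ρv, ρ)`. -/
theorem stmt16 (γ ρ v p E : ℝ) (hρ : 0 < ρ) (hp : 0 < p) (hγ : 1 < γ)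
    (hE : E = p / (γ - 1) + ρ * v ^ 2 / 2)
    (η : ℝ → ℝ → ℝ → ℝ)
    (hη : ∀ u1 u2 u3, η u1 u2 u3 =
      u1 * (((γ - 1) * (u3 - u2 ^ 2 / (2 * u1))) / u1 ^ γ) ^ (1 / (γ + 1)))
    (pstar : ℝ)
    (hpstar : pstar = (γ - 1) / (γ + 1) * (p / ρ ^ γ) ^ (1 / (γ + 1))) :
    HasDerivAt (fun u1 => η u1 (ρ * v) E) (pstar / p * E) ρ ∧
    HasDerivAt (fun u2 => η ρ u2 E) (pstar / p * (-(ρ * v))) (ρ * v) ∧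
    HasDerivAt (fun u3 => η ρ (ρ * v) u3) (pstar / p * ρ) E := by
  have hρ' : ρ ≠ 0 := hρ.ne'
  have hp' : p ≠ 0 := hp.ne'
  have hγ1 : γ + 1 ≠ 0 := by linarith
  have hγ2 : γ - 1 ≠ 0 := by linarith
  have hrg : (0:ℝ) < ρ ^ γ := Real.rpow_pos_of_pos hρ γ
  have hrg' : ρ ^ γ ≠ 0 := hrg.ne'
  have hX : (0:ℝ) < p / ρ ^ γ := div_pos hp hrg
  have hXne : p / ρ ^ γ ≠ 0 := hX.ne'
  have hinner2 : (γ-1)*(E - (ρ*v)^2/(2*ρ)) = p := by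
    rw [hE]; field_simp; ring
  have hinner : (γ-1)*(E - (ρ*v)^2/(2*ρ))/ρ^γ = p/ρ^γ := by rw [hinner2]
  have hAne : (γ-1)*(E - (ρ*v)^2/(2*ρ))/ρ^γ ≠ 0 := by rw [hinner]; exact hXne
  have hXe : (p/ρ^γ) ^ (1/(γ+1) - 1) = (p/ρ^γ)^(1/(γ+1)) / (p/ρ^γ) := by
    rw [Real.rpow_sub hX, Real.rpow_one]
  have hrg1 : ρ ^ (γ - 1) = ρ ^ γ / ρ := by
    rw [Real.rpow_sub hρ, Real.rpow_one]
  refine ⟨?_, ?_, ?_⟩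
  · simp only [hη]
    have hc : HasDerivAt (fun u1 => (ρ*v)^2/(2*u1))
        ((0*(2*ρ) - (ρ*v)^2*(2*1))/(2*ρ)^2) ρ :=
      (hasDerivAt_const ρ _).div ((hasDerivAt_id' ρ).const_mul 2) (by positivity)
    have hN : HasDerivAt (fun u1 => (γ-1)*(E - (ρ*v)^2/(2*u1)))
        ((γ-1) * (0 - (0*(2*ρ) - (ρ*v)^2*(2*1))/(2*ρ)^2)) ρ :=
      ((hasDerivAt_const ρ E).sub hc).const_mul (γ-1)
    have hD : HasDerivAt (fun u1 => u1 ^ γ) (γ * ρ^(γ-1)) ρ :=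
      Real.hasDerivAt_rpow_const (Or.inl hρ')
    have hA := hN.div hD hrg'
    have hB := hA.rpow_const (p := 1/(γ+1)) (Or.inl hAne)
    have hF := (hasDerivAt_id' ρ).mul hB
    convert hF using 1
    · rfl
    · rfl
    · rfl
    simp only [Pi.div_apply]
    rw [hinner, hXe, hinner2, hpstar, hE, hrg1]
    field_simp
    ring
  · simp only [hη]
    have hN : HasDerivAt (fun u2 => (γ-1)*(E - u2^2/(2*ρ))/ρ^γ)
        ((γ-1) * (0 - 2*(ρ*v)^1*1/(2*ρ))/ρ^γ) (ρ*v) := by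
      exact (((hasDerivAt_const (ρ*v) E).sub (((hasDerivAt_id' (ρ*v)).pow 2).div_const
        (2*ρ))).const_mul (γ-1)).div_const _
    have hB := hN.rpow_const (p := 1/(γ+1)) (Or.inl hAne)
    have hF := hB.const_mul ρ
    convert hF using 1
    · rfl
    · rfl
    rw [hinner, hXe, hpstar]
    field_simp
    ring
  · simp only [hη]
    have hN : HasDerivAt (fun u3 => (γ-1)*(u3 - (ρ*v)^2/(2*ρ))/ρ^γ)
        ((γ-1) * 1/ρ^γ) E :=
      (((hasDerivAt_id' E).sub_const _).const_mul (γ-1)).div_const _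
    have hB := hN.rpow_const (p := 1/(γ+1)) (Or.inl hAne)
    have hF := hB.const_mul ρ
    convert hF using 1
    · rfl
    · rfl
    rw [hinner, hXe, hpstar]
    field_simp
end
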